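/- Let Σ be a compact surface with boundary contained in the sphere ∂B_{r0} ⊂ ℝ³ (Σ ⊂ closure of B_{r0}, 0 ∈ Σ), and let |A| denote a continuous nonnegative function on Σ vanishing on ∂Σ with sup over B_{r0/2} ∩ Σ of |A|² at least 16 C² r0^{−2}. Then there exist y ∈ Σ and r1 > 0 with r1 < r0 − |y| such that |A|²(y) = C² r1^{−2} and sup over B_{r1}(y) ∩ Σ of |A|² ≤ 4 C² r1^{−2}. -/

import Mathlib

open Real Set Metric

/-- the point-selection (blow up) lemma.  `Sig` is a compact
surface in the closed ball `B̄_{r0} ⊂ ℝ³` containing `0`, whose boundary lies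
in the sphere `∂B_{r0}`; `a` abstracts the curvature function `|A|`, which is
continuous, nonnegative, and vanishes on `∂Σ ⊂ ∂B_{r0}`.  If
`sup_{B_{r0/2} ∩ Σ} |A|² ≥ 16 C² r0⁻²` (attained at some point by compactness),
then there are `y ∈ Σ` and `0 < r1 < r0 - |y|` with `|A|²(y) = C² r1⁻²` and
`sup_{B_{r1}(y) ∩ Σ} |A|² ≤ 4 C² r1⁻²`. -/
theorem blow_up_point_selection
    (Sig : Set (EuclideanSpace ℝ (Fin 3))) (a : EuclideanSpace ℝ (Fin 3) → ℝ)
    (r0 C : ℝ) (hr0 : 0 < r0) (hC : 0 < C)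
    (hcomp : IsCompact Sig) (hsub : Sig ⊆ Metric.closedBall 0 r0)
    (h0 : (0 : EuclideanSpace ℝ (Fin 3)) ∈ Sig)
    (hcont : ContinuousOn a Sig)
    (hnonneg : ∀ x ∈ Sig, 0 ≤ a x)
    (hvanish : ∀ x ∈ Sig, ‖x‖ = r0 → a x = 0)
    (hbig : ∃ x ∈ Sig ∩ Metric.closedBall 0 (r0 / 2), 16 * C ^ 2 / r0 ^ 2 ≤ (a x) ^ 2) :
    ∃ y ∈ Sig, ∃ r1 : ℝ, 0 < r1 ∧ r1 < r0 - ‖y‖ ∧ (a y) ^ 2 = C ^ 2 / r1 ^ 2 ∧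
      ∀ z ∈ Sig ∩ Metric.ball y r1, (a z) ^ 2 ≤ 4 * C ^ 2 / r1 ^ 2 := by
  set F : EuclideanSpace ℝ (Fin 3) → ℝ := fun x => (r0 - ‖x‖) ^ 2 * (a x) ^ 2 with hF
  have hFcont : ContinuousOn F Sig :=
    (((continuous_const.sub continuous_norm).pow 2).continuousOn).mul (hcont.pow 2)
  obtain ⟨y, hySig, hymax⟩ := hcomp.exists_isMaxOn ⟨0, h0⟩ hFcont
  -- lower bound on F y
  obtain ⟨x0, ⟨hx0Sig, hx0ball⟩, hx0big⟩ := hbig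
  have hx0norm : ‖x0‖ ≤ r0 / 2 := by
    simpa [Metric.mem_closedBall, dist_zero_right] using hx0ball
  have hFx0 : 4 * C ^ 2 ≤ F x0 := by
    have h1 : r0 / 2 ≤ r0 - ‖x0‖ := by linarith
    have h2 : (r0 / 2) ^ 2 ≤ (r0 - ‖x0‖) ^ 2 := by
      apply pow_le_pow_left₀ (by positivity) h1
    have h3 : 16 * C ^ 2 / r0 ^ 2 ≤ (a x0) ^ 2 := hx0big
    have hr2 : (0:ℝ) < r0 ^ 2 := by positivity
    have := mul_le_mul h2 h3 (by positivity) (by positivity)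
    calc 4 * C ^ 2 = (r0 / 2) ^ 2 * (16 * C ^ 2 / r0 ^ 2) := by
          field_simp; ring
      _ ≤ (r0 - ‖x0‖) ^ 2 * (a x0) ^ 2 := this
      _ = F x0 := rfl
  have hFy : 4 * C ^ 2 ≤ F y := le_trans hFx0 (hymax hx0Sig)
  have hynorm : ‖y‖ ≤ r0 := by
    simpa [Metric.mem_closedBall, dist_zero_right] using hsub hySig
  have hσ0 : 0 ≤ r0 - ‖y‖ := by linarith
  have hay0 : 0 ≤ a y := hnonneg y hySig
  -- key: (r0 - ‖y‖) * a y ≥ 2C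
  have hkey : 2 * C ≤ (r0 - ‖y‖) * a y := by
    have h1 : (2 * C) ^ 2 ≤ ((r0 - ‖y‖) * a y) ^ 2 := by
      have : F y = ((r0 - ‖y‖) * a y) ^ 2 := by simp [hF, mul_pow]
      nlinarith
    have h2 : 0 ≤ (r0 - ‖y‖) * a y := mul_nonneg hσ0 hay0
    nlinarith
  have hay : 0 < a y := by nlinarith
  have hσpos : 0 < r0 - ‖y‖ := by nlinarith
  have h2r1 : 2 * (C / a y) ≤ r0 - ‖y‖ := by
    rw [← mul_div_assoc, div_le_iff₀ hay]; nlinarith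
  refine ⟨y, hySig, C / a y, by positivity, ?_, ?_, ?_⟩
  · have hr1pos : 0 < C / a y := by positivity
    linarith
  · rw [div_pow, eq_div_iff (by positivity)]
    field_simp
  · intro z ⟨hzSig, hzball⟩
    have hdist : ‖z - y‖ < C / a y := by
      simpa [dist_eq_norm] using hzball
    have hz1 : ‖z‖ ≤ ‖y‖ + ‖z - y‖ := by
      have := norm_add_le y (z - y)
      simpa using this
    have hσhalf : (r0 - ‖y‖) / 2 ≤ r0 - ‖z‖ := by linarith
    have hFz : F z ≤ F y := hymax hzSig
    have haz : 0 ≤ a z := hnonneg z hzSig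
    have hgoal : (a z) ^ 2 ≤ 4 * (a y) ^ 2 := by
      have hFz' : (r0 - ‖z‖) ^ 2 * (a z) ^ 2 ≤ (r0 - ‖y‖) ^ 2 * (a y) ^ 2 := hFz
      have hhalf : ((r0 - ‖y‖) / 2) ^ 2 ≤ (r0 - ‖z‖) ^ 2 :=
        pow_le_pow_left₀ (by positivity) hσhalf 2
      have hle : ((r0 - ‖y‖) / 2) ^ 2 * (a z) ^ 2 ≤ (r0 - ‖y‖) ^ 2 * (a y) ^ 2 :=
        le_trans (mul_le_mul_of_nonneg_right hhalf (sq_nonneg _)) hFz'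
      nlinarith [mul_pos hσpos hσpos, sq_nonneg (a z)]
    have : 4 * C ^ 2 / (C / a y) ^ 2 = 4 * (a y) ^ 2 := by
      field_simp
    rw [this]
    exact hgoal
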